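/- arXiv:2309.01300 — 4 statements merged into one kernel-verified Lean document; each statement's English description precedes it below -/
import Mathlib

section
/- Let ψ be a critical branching mechanism (ψ'(0+) = 0) satisfying ∫^∞ 1/ψ < ∞, and let φ̂ denote the inverse of φ(λ) = ∫_λ^∞ 1/ψ(u) du. Then for every s > 0, lim_{t→∞} ψ(φ̂(t+s)) / ψ(φ̂(t)) = 1. -/
open MeasureTheory Set Filter

/-- A branching mechanism given by the Lévy–Khintchine formula. -/
def LevyMechanism (α σ : ℝ) (π : Measure ℝ) (ψ : ℝ → ℝ) : Prop :=
  0 ≤ σ ∧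
  Integrable (fun r => min r (r ^ 2)) (π.restrict (Set.Ioi 0)) ∧
  ∀ l : ℝ, ψ l = α * l + σ ^ 2 / 2 * l ^ 2 +
      ∫ r in Set.Ioi 0, (Real.exp (-l * r) - 1 + l * r) ∂π

set_option linter.unusedSectionVars false
set_option maxHeartbeats 1000000


lemma expq_nonneg {x : ℝ} (hx : 0 ≤ x) : 0 ≤ Real.exp (-x) - 1 + x := by
  nlinarith [Real.add_one_le_exp (-x)]

lemma expq_le_sq {x : ℝ} (hx : 0 ≤ x) : Real.exp (-x) - 1 + x ≤ x ^ 2 / 2 := by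
  have key : ∀ y ∈ Set.Ici (0:ℝ), HasDerivAt (fun t => t ^ 2 / 2 - t + 1 - Real.exp (-t))
      (y - 1 + Real.exp (-y)) y := by
    intro y _
    have h1 : HasDerivAt (fun t : ℝ => Real.exp (-t)) (-Real.exp (-y)) y := by
      simpa using ((hasDerivAt_id y).neg).exp
    have h2 : HasDerivAt (fun t : ℝ => t ^ 2 / 2 - t + 1) (y - 1) y := by
      have := (((hasDerivAt_pow 2 y).div_const 2).sub (hasDerivAt_id y)).add_const 1
      simpa using this
    exact (h2.sub h1).congr_deriv (by ring)
  have mono : MonotoneOn (fun t : ℝ => t ^ 2 / 2 - t + 1 - Real.exp (-t)) (Set.Ici 0) := by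
    apply monotoneOn_of_deriv_nonneg (convex_Ici 0)
    · exact Continuous.continuousOn (by continuity)
    · intro y hy
      exact (key y (interior_subset hy)).differentiableAt.differentiableWithinAt
    · intro y hy
      rw [interior_Ici] at hy
      rw [(key y (Set.mem_Ici.mpr (le_of_lt hy))).deriv]
      nlinarith [Real.add_one_le_exp (-y)]
  have h0 := mono (Set.mem_Ici.mpr le_rfl) hx hx
  simp at h0
  nlinarith [h0]

lemma expq_le_lin {x : ℝ} (hx : 0 ≤ x) : Real.exp (-x) - 1 + x ≤ x := by
  nlinarith [Real.exp_le_one_iff.mpr (neg_nonpos.mpr hx)]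

lemma g_integrable {π : Measure ℝ} (hπ : Integrable (fun r => min r (r ^ 2)) (π.restrict (Set.Ioi 0)))
    {l : ℝ} (hl : 0 ≤ l) :
    Integrable (fun r => Real.exp (-l * r) - 1 + l * r) (π.restrict (Set.Ioi 0)) := by
  refine Integrable.mono' (hπ.const_mul (max l (l ^ 2 / 2)))
    (Continuous.aestronglyMeasurable (by continuity)) ?_
  rw [ae_restrict_iff' measurableSet_Ioi]
  refine ae_of_all _ fun r hr => ?_
  have hr0 : (0:ℝ) < r := hr
  have hx : 0 ≤ l * r := mul_nonneg hl hr0.le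
  have h0 := expq_nonneg hx
  have h1 := expq_le_sq hx
  have h2 := expq_le_lin hx
  rw [show -l*r = -(l*r) by ring, Real.norm_eq_abs, abs_of_nonneg h0]
  rcases le_total r 1 with h | h
  · have : min r (r ^ 2) = r ^ 2 := min_eq_right (by nlinarith)
    rw [this]
    have : Real.exp (-(l*r)) - 1 + l*r ≤ (l*r)^2/2 := h1
    nlinarith [le_max_right l (l ^ 2 / 2), sq_nonneg r, mul_le_mul_of_nonneg_right (le_max_right l (l^2/2)) (sq_nonneg r)]
  · have : min r (r ^ 2) = r := min_eq_left (by nlinarith)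
    rw [this]
    have := mul_le_mul_of_nonneg_right (le_max_left l (l ^ 2 / 2)) hr0.le
    nlinarith

lemma g_convexOn (r : ℝ) : ConvexOn ℝ Set.univ (fun l : ℝ => Real.exp (-l * r) - 1 + l * r) := by
  refine ⟨convex_univ, fun x _ y _ p q hp hq hpq => ?_⟩
  have h := convexOn_exp.2 (Set.mem_univ (-x * r)) (Set.mem_univ (-y * r)) hp hq hpq
  simp only [smul_eq_mul] at *
  have e1 : -(p * x + q * y) * r = p * (-x * r) + q * (-y * r) := by ring
  rw [e1]
  nlinarith [h]

section
variable {σ : ℝ} {π : Measure ℝ} {ψ : ℝ → ℝ}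
  (hπ : Integrable (fun r => min r (r ^ 2)) (π.restrict (Set.Ioi 0)))
  (hform : ∀ l : ℝ, ψ l = σ ^ 2 / 2 * l ^ 2 +
      ∫ r in Set.Ioi 0, (Real.exp (-l * r) - 1 + l * r) ∂π)

include hπ hform

lemma psi_zero : ψ 0 = 0 := by
  rw [hform]
  simp

lemma psi_convexOn : ConvexOn ℝ (Set.Ici 0) ψ := by
  refine ⟨convex_Ici 0, fun x hx y hy p q hp hq hpq => ?_⟩
  simp only [smul_eq_mul]
  have hx0 : (0:ℝ) ≤ x := hx
  have hy0 : (0:ℝ) ≤ y := hy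
  have hz0 : (0:ℝ) ≤ p * x + q * y := by positivity
  rw [hform, hform, hform]
  have hIx := g_integrable hπ hx0
  have hIy := g_integrable hπ hy0
  have hIz := g_integrable hπ hz0
  have hint : (∫ r in Set.Ioi 0, (Real.exp (-(p * x + q * y) * r) - 1 + (p * x + q * y) * r) ∂π)
      ≤ ∫ r in Set.Ioi 0, (p * (Real.exp (-x * r) - 1 + x * r)
        + q * (Real.exp (-y * r) - 1 + y * r)) ∂π := by
    refine integral_mono hIz ((hIx.const_mul p).add (hIy.const_mul q)) fun r => ?_
    have := (g_convexOn r).2 (Set.mem_univ x) (Set.mem_univ y) hp hq hpq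
    simpa only [smul_eq_mul] using this
  rw [integral_add (hIx.const_mul p) (hIy.const_mul q), MeasureTheory.integral_const_mul,
    MeasureTheory.integral_const_mul] at hint
  have key : σ ^ 2 / 2 * (p * x + q * y) ^ 2 ≤ p * (σ ^ 2 / 2 * x ^ 2) + q * (σ ^ 2 / 2 * y ^ 2) := by
    have hq1 : q = 1 - p := by linarith
    subst hq1
    nlinarith [mul_nonneg (sq_nonneg σ) (mul_nonneg (mul_nonneg hp hq) (sq_nonneg (x - y)))]
  linarith [hint, key]

lemma psi_nonneg (hψpos : ∀ l > (0:ℝ), 0 < ψ l) {l : ℝ} (hl : 0 ≤ l) : 0 ≤ ψ l := by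
  rcases eq_or_lt_of_le hl with h | h
  · rw [← h, psi_zero hπ hform]
  · exact (hψpos l h).le

lemma psi_mono (hψpos : ∀ l > (0:ℝ), 0 < ψ l) {a b : ℝ} (ha : 0 ≤ a) (hab : a ≤ b) :
    ψ a ≤ ψ b := by
  rcases eq_or_lt_of_le hab with h | h
  · rw [h]
  rcases eq_or_lt_of_le ha with h0 | h0
  · rw [← h0, psi_zero hπ hform]
    exact psi_nonneg hπ hform hψpos (ha.trans hab)
  · have hb : (0:ℝ) < b := h0.trans h
    have := (psi_convexOn hπ hform).slope_mono_adjacent (Set.mem_Ici.mpr le_rfl)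
      (Set.mem_Ici.mpr hb.le) h0 h
    rw [psi_zero hπ hform] at this
    have h1 : 0 ≤ (ψ a - 0) / (a - 0) := div_nonneg (by simpa using (hψpos a h0).le) (by linarith)
    have h2 := h1.trans this
    have := (div_nonneg_iff.mp h2)
    rcases this with ⟨h3, _⟩ | ⟨_, h4⟩
    · linarith
    · linarith

lemma psi_slope (hψpos : ∀ l > (0:ℝ), 0 < ψ l) {a b : ℝ} (ha : 0 < a) (hab : a < b) :
    ψ b - ψ a ≤ (b - a) * ψ (2 * b) / b := by
  have h2b : b < 2 * b := by linarith
  have := (psi_convexOn hπ hform).slope_mono_adjacent (Set.mem_Ici.mpr (by linarith : (0:ℝ) ≤ a))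
    (Set.mem_Ici.mpr (by linarith : (0:ℝ) ≤ 2 * b)) hab h2b
  have hb : (0:ℝ) < b := ha.trans hab
  have hba : (0:ℝ) < b - a := by linarith
  have h2 : (ψ b - ψ a) / (b - a) ≤ ψ (2 * b) / b := by
    have hψb := psi_nonneg hπ hform hψpos hb.le
    calc (ψ b - ψ a) / (b - a) ≤ (ψ (2*b) - ψ b) / (2*b - b) := this
    _ ≤ ψ (2*b) / b := by
        rw [show 2*b - b = b by ring]
        have hψb := psi_nonneg hπ hform hψpos hb.le
        gcongr <;> linarith
  calc ψ b - ψ a = (ψ b - ψ a) / (b - a) * (b - a) := by field_simp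
  _ ≤ ψ (2 * b) / b * (b - a) := by
      exact mul_le_mul_of_nonneg_right h2 hba.le
  _ = (b - a) * ψ (2 * b) / b := by ring

end

lemma g_slope_lim (r : ℝ) :
    Tendsto (fun l : ℝ => (Real.exp (-l * r) - 1 + l * r) / l) (nhdsWithin 0 (Set.Ioi 0)) (nhds 0) := by
  have hd : HasDerivAt (fun l : ℝ => Real.exp (-l * r) - 1 + l * r) 0 0 := by
    have h1 : HasDerivAt (fun l : ℝ => -l * r) (-r) 0 := by
      simpa using ((hasDerivAt_id (0:ℝ)).neg.mul_const r)
    have h2 := h1.exp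
    have h3 : HasDerivAt (fun l : ℝ => l * r) r 0 := by
      simpa using (hasDerivAt_id (0:ℝ)).mul_const r
    have := (h2.sub_const 1).add h3
    exact this.congr_deriv (by simp)
  have hs := hasDerivAt_iff_tendsto_slope.mp hd
  have hmono : nhdsWithin (0:ℝ) (Set.Ioi 0) ≤ nhdsWithin 0 {(0:ℝ)}ᶜ :=
    nhdsWithin_mono 0 (fun x hx => by simp [ne_of_gt (Set.mem_Ioi.mp hx)])
  refine (hs.mono_left hmono).congr fun l => ?_
  simp [slope_def_field]

lemma psi_div_lim {σ : ℝ} {π : Measure ℝ} {ψ : ℝ → ℝ}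
    (hπ : Integrable (fun r => min r (r ^ 2)) (π.restrict (Set.Ioi 0)))
    (hform : ∀ l : ℝ, ψ l = σ ^ 2 / 2 * l ^ 2 +
      ∫ r in Set.Ioi 0, (Real.exp (-l * r) - 1 + l * r) ∂π) :
    Tendsto (fun l => ψ l / l) (nhdsWithin 0 (Set.Ioi 0)) (nhds 0) := by
  have key : Tendsto (fun l : ℝ => ∫ r in Set.Ioi 0, (Real.exp (-l * r) - 1 + l * r) / l ∂π)
      (nhdsWithin 0 (Set.Ioi 0)) (nhds (∫ r in Set.Ioi 0, (0:ℝ) ∂π)) := by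
    apply tendsto_integral_filter_of_dominated_convergence (fun r => min r (r ^ 2))
    · filter_upwards with l
      exact Continuous.aestronglyMeasurable (by fun_prop (disch := skip))
    · have hmem : Set.Ioc (0:ℝ) 1 ∈ nhdsWithin (0:ℝ) (Set.Ioi 0) :=
        Ioc_mem_nhdsGT_of_mem (by norm_num : (0:ℝ) ∈ Set.Ico 0 1)
      filter_upwards [hmem] with l hl
      rw [ae_restrict_iff' measurableSet_Ioi]
      refine ae_of_all _ fun r hr => ?_
      have hr0 : (0:ℝ) < r := hr
      have hl0 : (0:ℝ) < l := hl.1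
      have hx : 0 ≤ l * r := by positivity
      have h0 := expq_nonneg hx
      have h1 := expq_le_sq hx
      have h2 := expq_le_lin hx
      rw [show -l * r = -(l * r) by ring, Real.norm_eq_abs,
        abs_of_nonneg (div_nonneg h0 hl0.le)]
      have hdr : (Real.exp (-(l * r)) - 1 + l * r) / l ≤ r := by
        rw [div_le_iff₀ hl0]
        nlinarith
      have hdr2 : (Real.exp (-(l * r)) - 1 + l * r) / l ≤ r ^ 2 := by
        rw [div_le_iff₀ hl0]
        nlinarith [hl.2, sq_nonneg r, mul_le_mul_of_nonneg_right hl.2 (sq_nonneg r)]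
      exact le_min hdr hdr2
    · exact hπ
    · refine ae_of_all _ fun r => g_slope_lim r
  rw [integral_zero] at key
  have hσ : Tendsto (fun l : ℝ => σ ^ 2 / 2 * l) (nhdsWithin 0 (Set.Ioi 0)) (nhds 0) := by
    have : Tendsto (fun l : ℝ => σ ^ 2 / 2 * l) (nhds 0) (nhds (σ ^ 2 / 2 * 0)) :=
      (continuous_const.mul continuous_id).tendsto 0
    simpa using this.mono_left nhdsWithin_le_nhds
  have := hσ.add key
  rw [add_zero] at this
  refine this.congr' ?_
  filter_upwards [self_mem_nhdsWithin] with l hl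
  have hl0 : (0:ℝ) < l := hl
  rw [hform l, integral_div]
  field_simp

section
variable {ψ φ : ℝ → ℝ}
  (hψpos : ∀ l > (0 : ℝ), 0 < ψ l)
  (hψmono : ∀ a b : ℝ, 0 ≤ a → a ≤ b → ψ a ≤ ψ b)
  (hint : ∀ l > (0 : ℝ), IntegrableOn (fun v => 1 / ψ v) (Set.Ioi l))
  (hφ : ∀ l > (0 : ℝ), φ l = ∫ v in Set.Ioi l, 1 / ψ v)

include hψpos hψmono hint hφ

lemma phi_diff {x y : ℝ} (hx : 0 < x) (hxy : x < y) :
    (y - x) * (1 / ψ y) ≤ φ x - φ y := by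
  have hy : (0:ℝ) < y := hx.trans hxy
  have hU : Set.Ioi x = Set.Ioc x y ∪ Set.Ioi y := (Set.Ioc_union_Ioi_eq_Ioi hxy.le).symm
  have hIxy : IntegrableOn (fun v => 1 / ψ v) (Set.Ioc x y) :=
    (hint x hx).mono_set Set.Ioc_subset_Ioi_self
  have hsplit : φ x = (∫ v in Set.Ioc x y, 1 / ψ v) + φ y := by
    rw [hφ x hx, hφ y hy, hU,
      setIntegral_union (Set.Ioc_disjoint_Ioi le_rfl) measurableSet_Ioi hIxy (hint y hy)]
  have hconst : IntegrableOn (fun _ : ℝ => 1 / ψ y) (Set.Ioc x y) :=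
    integrableOn_const measure_Ioc_lt_top.ne
  have hmono : ∫ v in Set.Ioc x y, (1 / ψ y) ≤ ∫ v in Set.Ioc x y, 1 / ψ v := by
    refine setIntegral_mono_on hconst hIxy measurableSet_Ioc fun u hu => ?_
    have hu0 : 0 < u := hx.trans hu.1
    exact one_div_le_one_div_of_le (hψpos u hu0) (hψmono u y hu0.le hu.2)
  have hcval : ∫ v in Set.Ioc x y, (1 / ψ y) = (y - x) * (1 / ψ y) := by
    rw [setIntegral_const, measureReal_def, Real.volume_Ioc, ENNReal.toReal_ofReal (by linarith), smul_eq_mul]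
  rw [hsplit]
  rw [hcval] at hmono
  linarith

lemma phi_anti {x y : ℝ} (hx : 0 < x) (hxy : x ≤ y) : φ y ≤ φ x := by
  rcases eq_or_lt_of_le hxy with h | h
  · rw [h]
  · have hy : (0:ℝ) < y := hx.trans h
    have := phi_diff hψpos hψmono hint hφ hx h
    have h2 : 0 ≤ (y - x) * (1 / ψ y) := mul_nonneg (by linarith) (one_div_nonneg.mpr (hψpos y hy).le)
    linarith

end

/-- For a critical branching mechanism (`ψ'(0+) = 0`, i.e. `α = 0`) with
`∫^∞ 1/ψ < ∞`, one has `ψ(φ̂(t+s))/ψ(φ̂(t)) → 1` as `t → ∞`. -/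
theorem stmt4 (σ : ℝ) (π : Measure ℝ) (ψ φ φhat : ℝ → ℝ)
    (hψ : LevyMechanism 0 σ π ψ)
    (hψpos : ∀ l > (0 : ℝ), 0 < ψ l)
    (hint : ∀ l > (0 : ℝ), IntegrableOn (fun v => 1 / ψ v) (Set.Ioi l))
    (hφ : ∀ l > (0 : ℝ), φ l = ∫ v in Set.Ioi l, 1 / ψ v)
    (hφhat : ∀ t > (0 : ℝ), 0 < φhat t ∧ φ (φhat t) = t) :
    ∀ s > (0 : ℝ),
      Tendsto (fun t => ψ (φhat (t + s)) / ψ (φhat t)) atTop (nhds 1) := by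
  have hπ := hψ.2.1
  have hform : ∀ l : ℝ, ψ l = σ ^ 2 / 2 * l ^ 2 +
      ∫ r in Set.Ioi 0, (Real.exp (-l * r) - 1 + l * r) ∂π := by
    intro l
    have := hψ.2.2 l
    simpa using this
  have hψmono : ∀ a b : ℝ, 0 ≤ a → a ≤ b → ψ a ≤ ψ b :=
    fun a b ha hab => psi_mono hπ hform hψpos ha hab
  intro s hs
  rw [Metric.tendsto_atTop]
  intro ε hε
  have hev : ∀ᶠ l in nhdsWithin (0:ℝ) (Set.Ioi 0), ψ l / l < ε / (2 * s) :=
    (psi_div_lim hπ hform).eventually_lt_const (by positivity)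
  obtain ⟨δ, hδmem, hδ⟩ := mem_nhdsGT_iff_exists_Ioc_subset.mp hev
  have hδ0 : (0:ℝ) < δ := hδmem
  refine ⟨max (φ (δ/2) + 1) 1, fun t ht => ?_⟩
  have ht1 : (1:ℝ) ≤ t := le_trans (le_max_right _ _) ht
  have ht0 : (0:ℝ) < t := by linarith
  obtain ⟨hb0, hbφ⟩ := hφhat t ht0
  obtain ⟨ha0, haφ⟩ := hφhat (t + s) (by linarith)
  set a := φhat (t + s) with ha_def
  set b := φhat t with hb_def
  have hψa := hψpos a ha0
  have hψb := hψpos b hb0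
  -- b < δ / 2
  have hbδ : b < δ / 2 := by
    by_contra hcon
    push_neg at hcon
    have h1 : φ b ≤ φ (δ/2) := phi_anti hψpos hψmono hint hφ (by linarith) hcon
    have h2 : φ (δ/2) + 1 ≤ t := le_trans (le_max_left _ _) ht
    rw [hbφ] at h1
    linarith
  -- a < b
  have hab : a < b := by
    by_contra hcon
    push_neg at hcon
    have h1 : φ a ≤ φ b := phi_anti hψpos hψmono hint hφ hb0 hcon
    rw [haφ, hbφ] at h1
    linarith
  -- b - a ≤ s * ψ b
  have h3 : b - a ≤ s * ψ b := by
    have hd := phi_diff hψpos hψmono hint hφ ha0 hab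
    rw [haφ, hbφ] at hd
    have hd2 : (b - a) * (1 / ψ b) ≤ s := by linarith
    have := mul_le_mul_of_nonneg_right hd2 hψb.le
    calc b - a = (b - a) * (1 / ψ b) * ψ b := by field_simp
    _ ≤ s * ψ b := this
  -- slope bound
  have h2 : ψ b - ψ a ≤ (b - a) * ψ (2 * b) / b := psi_slope hπ hform hψpos ha0 hab
  have hψ2b : 0 ≤ ψ (2 * b) := psi_nonneg hπ hform hψpos (by linarith)
  -- smallness of ψ(2b)/(2b)
  have h4 : ψ (2 * b) / (2 * b) < ε / (2 * s) :=
    hδ ⟨by linarith, by linarith⟩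
  have h5 : s * ψ (2 * b) < ε * b := by
    rw [div_lt_div_iff₀ (by linarith) (by linarith)] at h4
    nlinarith
  have h6 : ψ b - ψ a < ε * ψ b := by
    have hstep : (b - a) * ψ (2 * b) / b ≤ (s * ψ b) * ψ (2 * b) / b := by gcongr
    have hlast : (s * ψ b) * ψ (2 * b) / b < ε * ψ b := by
      rw [show (s * ψ b) * ψ (2 * b) / b = (s * ψ (2 * b) / b) * ψ b by ring]
      apply mul_lt_mul_of_pos_right ?_ hψb
      rw [div_lt_iff₀ (by linarith : (0:ℝ) < b)]
      linarith
    linarith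
  -- conclude
  have h1 : ψ a ≤ ψ b := hψmono a b ha0.le hab.le
  rw [Real.dist_eq]
  have hr1 : ψ a / ψ b ≤ 1 := div_le_one_of_le₀ h1 hψb.le
  rw [abs_of_nonpos (by linarith)]
  have heq : 1 - ψ a / ψ b = (ψ b - ψ a) / ψ b := by field_simp
  have : (ψ b - ψ a) / ψ b < ε := by
    rw [div_lt_iff₀ hψb]
    linarith
  linarith [heq ▸ this]
end

section
/- Let ψ be a (sub)critical branching mechanism satisfying ∫^∞ 1/ψ < ∞, φ̂ the inverse of φ(λ) = ∫_λ^∞ 1/ψ(u) du. Then for every x > 0, ∫₀^∞ (1 - e^{-x φ̂(t)}) dt < ∞ if and only if ∫_{0+} u/ψ(u) du < ∞. -/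
open MeasureTheory Set Filter

/-- For a (sub)critical branching mechanism, the expected extinction time
`∫₀^∞ (1 − e^{-x φ̂(t)}) dt` is finite if and only if `∫_{0+} u/ψ(u) du < ∞`. -/
theorem stmt9 (ψ φ φhat : ℝ → ℝ)
    (hψpos : ∀ l > (0 : ℝ), 0 < ψ l)
    (hψcont : ContinuousOn ψ (Set.Ioi 0))
    (hint : ∀ l > (0 : ℝ), IntegrableOn (fun v => 1 / ψ v) (Set.Ioi l))
    (hφ : ∀ l > (0 : ℝ), φ l = ∫ v in Set.Ioi l, 1 / ψ v)
    (hφhat : ∀ t > (0 : ℝ), 0 < φhat t ∧ φ (φhat t) = t) :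
    ∀ x > (0 : ℝ),
      (IntegrableOn (fun t => 1 - Real.exp (-x * φhat t)) (Set.Ioi 0) ↔
        IntegrableOn (fun u => u / ψ u) (Set.Ioo 0 1)) := by
  -- continuity of 1/ψ on Ioi 0
  have hcont : ContinuousOn (fun v => 1 / ψ v) (Set.Ioi 0) :=
    continuousOn_const.div hψcont (fun v hv => (hψpos v hv).ne')
  -- φ a - φ l = ∫_{Ioc a l} 1/ψ  for 0 < a ≤ l
  have hsub : ∀ a l : ℝ, 0 < a → a ≤ l → φ a - φ l = ∫ v in Set.Ioc a l, 1 / ψ v := by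
    intro a l ha hal
    have hl : 0 < l := lt_of_lt_of_le ha hal
    have hun : Set.Ioc a l ∪ Set.Ioi l = Set.Ioi a := Set.Ioc_union_Ioi_eq_Ioi hal
    have hdisj : Disjoint (Set.Ioc a l) (Set.Ioi l) := by
      rw [Set.disjoint_left]
      rintro y ⟨_, hy2⟩ hy3
      exact absurd hy3 (not_lt.mpr hy2)
    have h1 : IntegrableOn (fun v => 1 / ψ v) (Set.Ioc a l) :=
      (hint a ha).mono_set Set.Ioc_subset_Ioi_self
    have h2 : IntegrableOn (fun v => 1 / ψ v) (Set.Ioi l) := hint l hl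
    have h3 := setIntegral_union hdisj measurableSet_Ioi h1 h2
    rw [hun] at h3
    rw [hφ a ha, hφ l hl, h3]; ring
  -- positivity of the increment
  have hpos : ∀ a l : ℝ, 0 < a → a < l → 0 < ∫ v in Set.Ioc a l, 1 / ψ v := by
    intro a l ha hal
    have h1 : IntegrableOn (fun v => 1 / ψ v) (Set.Ioc a l) :=
      (hint a ha).mono_set Set.Ioc_subset_Ioi_self
    have hii : IntervalIntegrable (fun v => 1 / ψ v) volume a l :=
      (intervalIntegrable_iff_integrableOn_Ioc_of_le hal.le).mpr h1
    have h2 := intervalIntegral.intervalIntegral_pos_of_pos_on hii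
      (fun y hy => one_div_pos.mpr (hψpos y (ha.trans hy.1))) hal
    rwa [intervalIntegral.integral_of_le hal.le] at h2
  -- φ is strictly antitone on Ioi 0
  have hanti : ∀ a l : ℝ, 0 < a → a < l → φ l < φ a := by
    intro a l ha hal
    have := hsub a l ha hal.le
    have := hpos a l ha hal
    linarith
  have hantiOn : StrictAntiOn φ (Set.Ioi 0) := fun a ha l _ hal => hanti a l ha hal
  -- φ is positive on Ioi 0
  have hφpos : ∀ l > (0 : ℝ), 0 < φ l := by
    intro l hl
    have h1 : φ (l + 1) < φ l := hanti l (l + 1) hl (by linarith)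
    have h2 : 0 ≤ φ (l + 1) := by
      rw [hφ (l + 1) (by linarith)]
      exact setIntegral_nonneg measurableSet_Ioi
        (fun v hv => le_of_lt (one_div_pos.mpr (hψpos v (by
          have : l + 1 < v := hv; linarith))))
    linarith
  have hφ1 : 0 < φ 1 := hφpos 1 one_pos
  -- φhat is strictly antitone on Ioi 0
  have hhanti : ∀ t t' : ℝ, 0 < t → t < t' → φhat t' < φhat t := by
    intro t t' ht htt'
    have ht' : 0 < t' := ht.trans htt'
    by_contra h
    push_neg at h
    rcases eq_or_lt_of_le h with heq | hlt
    · rw [← (hφhat t ht).2, ← (hφhat t' ht').2, heq] at htt'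
      exact lt_irrefl _ htt'
    · have := hanti (φhat t) (φhat t') (hφhat t ht).1 hlt
      rw [(hφhat t ht).2, (hφhat t' ht').2] at this
      linarith
  -- φhat t < 1 for t > φ 1
  have hhlt1 : ∀ t : ℝ, φ 1 < t → φhat t < 1 := by
    intro t ht
    have ht0 : 0 < t := hφ1.trans ht
    by_contra h
    push_neg at h
    rcases eq_or_lt_of_le h with heq | hlt
    · rw [← (hφhat t ht0).2, ← heq] at ht
      exact lt_irrefl _ ht
    · have := hanti 1 (φhat t) one_pos hlt
      rw [(hφhat t ht0).2] at this
      linarith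
  -- φhat ∘ φ = id on Ioi 0
  have hinv : ∀ s : ℝ, 0 < s → φhat (φ s) = s := by
    intro s hs
    have h1 := hφhat (φ s) (hφpos s hs)
    exact hantiOn.injOn h1.1 hs h1.2
  -- image of (0,1) under φ
  have himage : φ '' Set.Ioo 0 1 = Set.Ioi (φ 1) := by
    ext t
    constructor
    · rintro ⟨s, ⟨hs0, hs1⟩, rfl⟩
      exact hanti s 1 hs0 hs1
    · intro ht
      have ht0 : 0 < t := hφ1.trans ht
      exact ⟨φhat t, ⟨(hφhat t ht0).1, hhlt1 t ht⟩, (hφhat t ht0).2⟩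
  -- derivative of φ
  have hderiv : ∀ s ∈ Set.Ioo (0:ℝ) 1, HasDerivWithinAt φ (-(1 / ψ s)) (Set.Ioo 0 1) s := by
    intro s hs
    have hs0 : 0 < s := hs.1
    have hii : IntervalIntegrable (fun v => 1 / ψ v) volume 1 s := by
      apply IntegrableOn.intervalIntegrable
      apply (hint (s/2) (by linarith)).mono_set
      intro y hy
      have : min 1 s ≤ y := (Set.uIcc_subset_uIcc_iff_le.mp subset_rfl).1.trans hy.1
      have hmin : s ≤ min 1 s := le_min hs.2.le le_rfl
      have : s/2 < y := by
        have := hmin.trans this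
        linarith
      exact this
    have hmeas : StronglyMeasurableAtFilter (fun v => 1 / ψ v) (nhds s) volume :=
      ContinuousOn.stronglyMeasurableAtFilter isOpen_Ioi hcont s hs0
    have hcs : ContinuousAt (fun v => 1 / ψ v) s :=
      hcont.continuousAt (isOpen_Ioi.mem_nhds hs0)
    have hF : HasDerivAt (fun l => ∫ v in (1:ℝ)..l, 1 / ψ v) (1 / ψ s) s :=
      intervalIntegral.integral_hasDerivAt_right hii hmeas hcs
    have hF' : HasDerivAt (fun l => φ 1 - ∫ v in (1:ℝ)..l, 1 / ψ v) (-(1 / ψ s)) s :=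
      hF.const_sub (φ 1)
    have heq : ∀ l ∈ Set.Ioi (0:ℝ), φ l = φ 1 - ∫ v in (1:ℝ)..l, 1 / ψ v := by
      intro l hl
      have hl0 : 0 < l := hl
      rcases le_total 1 l with h1l | hl1
      · rw [intervalIntegral.integral_of_le h1l, ← hsub 1 l one_pos h1l]; ring
      · rw [intervalIntegral.integral_of_ge hl1, ← hsub l 1 hl0 hl1]; ring
    have : HasDerivAt φ (-(1 / ψ s)) s := by
      apply hF'.congr_of_eventuallyEq
      filter_upwards [isOpen_Ioi.mem_nhds hs0] with l hl using heq l hl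
    exact this.hasDerivWithinAt
  -- the substitution
  have hkey : IntegrableOn φhat (Set.Ioi (φ 1)) ↔
      IntegrableOn (fun u => u / ψ u) (Set.Ioo 0 1) := by
    rw [← himage,
      integrableOn_image_iff_integrableOn_abs_deriv_smul measurableSet_Ioo hderiv
        (hantiOn.injOn.mono (fun y (hy : y ∈ Set.Ioo (0:ℝ) 1) => hy.1)) φhat]
    apply integrableOn_congr_fun _ measurableSet_Ioo
    intro s hs
    have hψs := hψpos s hs.1
    show |(-(1 / ψ s))| • φhat (φ s) = s / ψ s
    rw [hinv s hs.1, abs_neg, abs_of_pos (one_div_pos.mpr hψs), smul_eq_mul]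
    field_simp
  -- now fix x
  intro x hx
  -- measurability of φhat on (0, ∞)
  have hmφ : AEMeasurable φhat (volume.restrict (Set.Ioi 0)) :=
    aemeasurable_restrict_of_antitoneOn measurableSet_Ioi
      (fun a ha l hl hal => by
        rcases eq_or_lt_of_le hal with rfl | h
        · exact le_rfl
        · exact (hhanti a l ha h).le)
  have hmf : AEStronglyMeasurable (fun t => 1 - Real.exp (-x * φhat t))
      (volume.restrict (Set.Ioi 0)) := by
    have : AEMeasurable (fun t => 1 - Real.exp (-x * φhat t))
        (volume.restrict (Set.Ioi 0)) :=
      (aemeasurable_const.sub ((Real.measurable_exp.comp_aemeasurable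
        (hmφ.const_mul (-x)))))
    exact this.aestronglyMeasurable
  have hsub1 : Set.Ioi (φ 1) ⊆ Set.Ioi (0:ℝ) := fun t ht => hφ1.trans ht
  have hres : volume.restrict (Set.Ioi (φ 1)) ≤ volume.restrict (Set.Ioi (0:ℝ)) :=
    Measure.restrict_mono hsub1 le_rfl
  have hmφ1 : AEMeasurable φhat (volume.restrict (Set.Ioi (φ 1))) :=
    hmφ.mono_measure hres
  have hmf1 : AEStronglyMeasurable (fun t => 1 - Real.exp (-x * φhat t))
      (volume.restrict (Set.Ioi (φ 1))) := hmf.mono_measure hres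
  -- f is bounded by 1 and nonneg on Ioi 0
  have hf01 : ∀ t ∈ Set.Ioi (0:ℝ), 0 ≤ 1 - Real.exp (-x * φhat t) ∧
      1 - Real.exp (-x * φhat t) ≤ 1 := by
    intro t ht
    have h1 : Real.exp (-x * φhat t) ≤ 1 := by
      rw [Real.exp_le_one_iff]
      have := (hφhat t ht).1
      nlinarith
    exact ⟨by linarith, by nlinarith [Real.exp_pos (-x * φhat t)]⟩
  -- f integrable on Ioc 0 (φ 1)
  have hfIoc : IntegrableOn (fun t => 1 - Real.exp (-x * φhat t)) (Set.Ioc 0 (φ 1)) := by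
    have hconst : IntegrableOn (fun _ => (1:ℝ)) (Set.Ioc 0 (φ 1)) := by
      refine (integrableOn_const_iff (C := (1:ℝ)) (by simp)).mpr (Or.inr ?_)
      rw [Real.volume_Ioc]; exact ENNReal.ofReal_lt_top
    apply Integrable.mono' hconst
      (hmf.mono_measure (Measure.restrict_mono Set.Ioc_subset_Ioi_self le_rfl))
    rw [ae_restrict_iff' measurableSet_Ioc]
    filter_upwards with t ht
    have hb := hf01 t ht.1
    rw [Real.norm_eq_abs, abs_of_nonneg hb.1]
    exact hb.2
  -- on Ioi (φ 1): comparisons between f and φhat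
  have hcompare : ∀ t ∈ Set.Ioi (φ 1),
      x * Real.exp (-x) * φhat t ≤ 1 - Real.exp (-x * φhat t) ∧
      1 - Real.exp (-x * φhat t) ≤ x * φhat t := by
    intro t ht
    have ht0 : 0 < t := hφ1.trans ht
    have hy0 : 0 < φhat t := (hφhat t ht0).1
    have hy1 : φhat t < 1 := hhlt1 t ht
    set y := φhat t
    constructor
    · -- 1 - e^{-xy} ≥ xy e^{-xy} ≥ xy e^{-x}
      have h1 : x * y + 1 ≤ Real.exp (x * y) := Real.add_one_le_exp (x * y)
      have h2 : Real.exp (-x * y) = (Real.exp (x * y))⁻¹ := by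
        rw [← Real.exp_neg]; ring_nf
      have hexy : 0 < Real.exp (x * y) := Real.exp_pos _
      have h3 : x * y * Real.exp (-x * y) ≤ 1 - Real.exp (-x * y) := by
        have h5 : (x * y + 1) * (Real.exp (x * y))⁻¹ ≤
            Real.exp (x * y) * (Real.exp (x * y))⁻¹ :=
          mul_le_mul_of_nonneg_right h1 (inv_pos.mpr hexy).le
        rw [mul_inv_cancel₀ hexy.ne'] at h5
        rw [h2]
        nlinarith
      have h4 : Real.exp (-x) ≤ Real.exp (-x * y) := by
        apply Real.exp_le_exp.mpr
        nlinarith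
      have h6 : x * y * Real.exp (-x) ≤ x * y * Real.exp (-x * y) :=
        mul_le_mul_of_nonneg_left h4 (by positivity)
      nlinarith
    · have h1 : 1 - (x * y) ≤ Real.exp (-(x * y)) := by
        have := Real.add_one_le_exp (-(x * y))
        linarith
      have : -x * y = -(x * y) := by ring
      rw [this]
      linarith
  -- equivalence on Ioi (φ 1)
  have hequiv : IntegrableOn (fun t => 1 - Real.exp (-x * φhat t)) (Set.Ioi (φ 1)) ↔
      IntegrableOn φhat (Set.Ioi (φ 1)) := by
    constructor
    · intro h
      set c : ℝ := x * Real.exp (-x) with hcdef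
      have hcpos : 0 < c := by positivity
      apply Integrable.mono' ((h.const_mul c⁻¹))
        hmφ1.aestronglyMeasurable
      rw [ae_restrict_iff' measurableSet_Ioi]
      filter_upwards with t ht
      have hc := (hcompare t ht).1
      have ht0 : 0 < t := hφ1.trans ht
      have hy0 : 0 < φhat t := (hφhat t ht0).1
      rw [Real.norm_eq_abs, abs_of_pos hy0]
      have h5 : c * φhat t ≤ c * (c⁻¹ * (1 - Real.exp (-x * φhat t))) := by
        rw [← mul_assoc, mul_inv_cancel₀ hcpos.ne', one_mul]
        exact hc
      exact le_of_mul_le_mul_left h5 hcpos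
    · intro h
      apply Integrable.mono' (h.const_mul x) hmf1
      rw [ae_restrict_iff' measurableSet_Ioi]
      filter_upwards with t ht
      have hc := (hcompare t ht).2
      have ht0 : 0 < t := hφ1.trans ht
      have hf := hf01 t ht0
      rw [Real.norm_eq_abs, abs_of_nonneg hf.1]
      exact hc
  -- assemble
  rw [← hkey, ← hequiv]
  constructor
  · intro h
    exact h.mono_set hsub1
  · intro h
    have hun : Set.Ioc 0 (φ 1) ∪ Set.Ioi (φ 1) = Set.Ioi (0:ℝ) :=
      Set.Ioc_union_Ioi_eq_Ioi hφ1.le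
    have h2 := hfIoc.union h
    rwa [hun] at h2
end

section
/- Let ψ be a (sub)critical branching mechanism satisfying ∫^∞ 1/ψ < ∞, φ(λ) = ∫_λ^∞ 1/ψ(u) du with inverse φ̂, and let W be the scale function with Laplace transform 1/ψ. For s > 0 define μ_s(dx) = e^{-φ̂(s)x} W(x)/(sx) dx on (0,∞). Then μ_s is a probability measure and its Laplace transform is ∫₀^∞ e^{-λx} μ_s(dx) = φ(λ + φ̂(s))/s for all λ ≥ 0. -/
open MeasureTheory Set

private lemma expIntIoi {c : ℝ} (hc : 0 < c) (b : ℝ) :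
    ∫ u in Set.Ioi b, Real.exp (-(c * u)) = Real.exp (-(c * b)) / c := by
  have h := integral_Ioi_of_hasDerivAt_of_tendsto
      (f := fun u => -Real.exp (-(c * u)) / c) (f' := fun u => Real.exp (-(c * u)))
      (a := b) (m := 0) ?_ ?_ ?_ ?_
  · rw [h]; ring
  · exact Continuous.continuousWithinAt (by continuity)
  · intro x hx
    have h1 : HasDerivAt (fun u : ℝ => -(c * u)) (-c) x := by
      exact ((hasDerivAt_id x).const_mul c).neg.congr_deriv (by ring)
    have h2 := (Real.hasDerivAt_exp (-(c * x))).comp x h1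
    have h3 := h2.neg.div_const c
    refine HasDerivAt.congr_deriv (f := fun u => -Real.exp (-(c * u)) / c) h3 ?_
    rw [mul_neg, neg_neg, mul_div_assoc, div_self hc.ne', mul_one]
  · simpa [neg_mul] using exp_neg_integrableOn_Ioi b hc
  · have h1 : Filter.Tendsto (fun u : ℝ => -(c * u)) Filter.atTop Filter.atBot := by
      exact Filter.tendsto_neg_atTop_atBot.comp (Filter.tendsto_id.const_mul_atTop hc)
    have h2 := (Real.tendsto_exp_atBot.comp h1).neg.div_const c
    simpa using h2

/-- The size-biased stationary measure `μ_s(dx) = e^{-φ̂(s)x} W(x)/(sx) dx` is a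
probability measure on `(0,∞)` with Laplace transform `λ ↦ φ(λ + φ̂(s))/s`. -/
theorem stmt12 (ψ W φ φhat : ℝ → ℝ)
    (hψpos : ∀ l > (0 : ℝ), 0 < ψ l)
    (hint : ∀ l > (0 : ℝ), IntegrableOn (fun v => 1 / ψ v) (Set.Ioi l))
    (hφ : ∀ l > (0 : ℝ), φ l = ∫ v in Set.Ioi l, 1 / ψ v)
    (hφhat : ∀ t > (0 : ℝ), 0 < φhat t ∧ φ (φhat t) = t)
    (hWmono : StrictMonoOn W (Set.Ici 0))
    (hWcont : ContinuousOn W (Set.Ici 0))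
    (hWpos : ∀ x > (0 : ℝ), 0 < W x)
    (hLap : ∀ l > (0 : ℝ), ∫ x in Set.Ioi 0, Real.exp (-l * x) * W x = 1 / ψ l) :
    ∀ s > (0 : ℝ),
      IsProbabilityMeasure
        ((volume.restrict (Set.Ioi 0)).withDensity
          (fun x => ENNReal.ofReal (Real.exp (-(φhat s) * x) * W x / (s * x)))) ∧
      ∀ l ≥ (0 : ℝ),
        (∫ x, Real.exp (-l * x)
          ∂((volume.restrict (Set.Ioi 0)).withDensity
            (fun x => ENNReal.ofReal (Real.exp (-(φhat s) * x) * W x / (s * x))))) =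
          φ (l + φhat s) / s := by
  have hWmeas : AEMeasurable W (volume.restrict (Set.Ioi 0)) :=
    (hWcont.mono (Ioi_subset_Ici le_rfl)).aemeasurable measurableSet_Ioi
  -- Key: for b > 0, ∫⁻ x in (0,∞), e^{-bx} W(x)/x dx = φ(b)
  have key : ∀ b > (0 : ℝ),
      ∫⁻ x in Set.Ioi 0, ENNReal.ofReal (Real.exp (-b * x) * W x / x) = ENNReal.ofReal (φ b) := by
    intro b hb
    -- pointwise identity: e^{-bx} W x / x = ∫_{u>b} e^{-ux} W x du
    have step1 : ∫⁻ x in Set.Ioi 0, ENNReal.ofReal (Real.exp (-b * x) * W x / x)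
        = ∫⁻ x in Set.Ioi 0, ∫⁻ u in Set.Ioi b, ENNReal.ofReal (Real.exp (-u * x) * W x) := by
      refine setLIntegral_congr_fun measurableSet_Ioi ?_
      intro x hx
      have hx' : (0 : ℝ) < x := hx
      have hWx : 0 ≤ W x := (hWpos x hx').le
      have h1 : ∀ u : ℝ, ENNReal.ofReal (Real.exp (-u * x) * W x)
          = ENNReal.ofReal (Real.exp (-(x * u))) * ENNReal.ofReal (W x) := by
        intro u
        rw [← ENNReal.ofReal_mul (Real.exp_pos _).le]
        ring_nf
      simp_rw [h1]
      rw [lintegral_mul_const _ (by fun_prop)]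
      have h2 : ∫⁻ u in Set.Ioi b, ENNReal.ofReal (Real.exp (-(x * u)))
          = ENNReal.ofReal (Real.exp (-(x * b)) / x) := by
        rw [← expIntIoi hx' b]
        rw [ofReal_integral_eq_lintegral_ofReal]
        · simpa only [neg_mul] using (exp_neg_integrableOn_Ioi b hx').integrable
        · exact Filter.Eventually.of_forall fun u => (Real.exp_pos _).le
      rw [h2, ← ENNReal.ofReal_mul (by positivity)]
      congr 1
      rw [mul_comm x b]
      ring
    rw [step1]
    -- Tonelli
    have hswap : ∫⁻ x in Set.Ioi 0, ∫⁻ u in Set.Ioi b, ENNReal.ofReal (Real.exp (-u * x) * W x)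
        = ∫⁻ u in Set.Ioi b, ∫⁻ x in Set.Ioi 0, ENNReal.ofReal (Real.exp (-u * x) * W x) := by
      apply lintegral_lintegral_swap
      apply AEMeasurable.ennreal_ofReal
      have hexp : AEMeasurable (fun z : ℝ × ℝ => Real.exp (-z.2 * z.1))
          ((volume.restrict (Set.Ioi 0)).prod (volume.restrict (Set.Ioi b))) := by
        fun_prop
      exact hexp.mul hWmeas.comp_fst
    rw [hswap]
    -- inner integral equals 1/ψ u
    have step2 : ∀ u ∈ Set.Ioi b,
        ∫⁻ x in Set.Ioi 0, ENNReal.ofReal (Real.exp (-u * x) * W x)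
          = ENNReal.ofReal (1 / ψ u) := by
      intro u hu
      have hu' : (0 : ℝ) < u := hb.trans hu
      have hne : (1 : ℝ) / ψ u ≠ 0 := one_div_ne_zero (hψpos u hu').ne'
      have h0 := hLap u hu'
      have hInt : IntegrableOn (fun x => Real.exp (-u * x) * W x) (Set.Ioi 0) := by
        by_contra h
        rw [integral_undef h] at h0
        exact hne h0.symm
      rw [← h0, ofReal_integral_eq_lintegral_ofReal hInt]
      refine (ae_restrict_iff' measurableSet_Ioi).2 (Filter.Eventually.of_forall ?_)
      intro x hx
      exact mul_nonneg (Real.exp_pos _).le (hWpos x hx).le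
    rw [setLIntegral_congr_fun measurableSet_Ioi step2]
    -- outer integral equals φ b
    rw [← ofReal_integral_eq_lintegral_ofReal (hint b hb)]
    · rw [hφ b hb]
    · refine (ae_restrict_iff' measurableSet_Ioi).2 (Filter.Eventually.of_forall ?_)
      intro u hu
      exact (one_div_pos.mpr (hψpos u (hb.trans hu))).le
  -- main proof
  intro s hs
  obtain ⟨ha, hφa⟩ := hφhat s hs
  set a := φhat s with ha_def
  have hsne : ENNReal.ofReal s ≠ 0 := (ENNReal.ofReal_pos.2 hs).ne'
  have hdens : ∀ b > (0 : ℝ),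
      ∫⁻ x in Set.Ioi 0, ENNReal.ofReal (Real.exp (-b * x) * W x / (s * x))
        = ENNReal.ofReal (φ b / s) := by
    intro b hb
    have hpt : ∀ x ∈ Set.Ioi (0 : ℝ),
        ENNReal.ofReal (Real.exp (-b * x) * W x / (s * x))
          = ENNReal.ofReal (Real.exp (-b * x) * W x / x) * (ENNReal.ofReal s)⁻¹ := by
      intro x hx
      have hx' : (0 : ℝ) < x := hx
      have : Real.exp (-b * x) * W x / (s * x) = (Real.exp (-b * x) * W x / x) / s := by
        rw [div_div, mul_comm x s]
      rw [this, ENNReal.ofReal_div_of_pos hs, div_eq_mul_inv]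
    rw [setLIntegral_congr_fun measurableSet_Ioi hpt,
      lintegral_mul_const' _ _ (ENNReal.inv_ne_top.2 hsne), key b hb, ← div_eq_mul_inv,
      ← ENNReal.ofReal_div_of_pos hs]
  have hprob : IsProbabilityMeasure
      ((volume.restrict (Set.Ioi 0)).withDensity
        (fun x => ENNReal.ofReal (Real.exp (-a * x) * W x / (s * x)))) := by
    constructor
    rw [withDensity_apply _ MeasurableSet.univ, Measure.restrict_univ]
    rw [hdens a ha, hφa, div_self hs.ne', ENNReal.ofReal_one]
  refine ⟨hprob, ?_⟩
  intro l hl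
  have hdmeas : AEMeasurable (fun x => ENNReal.ofReal (Real.exp (-a * x) * W x / (s * x)))
      (volume.restrict (Set.Ioi 0)) := by
    apply AEMeasurable.ennreal_ofReal
    exact (((by fun_prop : AEMeasurable (fun x : ℝ => Real.exp (-a * x))
      (volume.restrict (Set.Ioi 0))).mul hWmeas).div (by fun_prop))
  rw [integral_eq_lintegral_of_nonneg_ae
      (Filter.Eventually.of_forall fun x => (Real.exp_pos _).le)
      (Continuous.aestronglyMeasurable (by continuity))]
  rw [lintegral_withDensity_eq_lintegral_mul₀ hdmeas (by fun_prop)]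
  have hpt2 : ∀ x ∈ Set.Ioi (0 : ℝ),
      ((fun x => ENNReal.ofReal (Real.exp (-a * x) * W x / (s * x))) *
        fun x => ENNReal.ofReal (Real.exp (-l * x))) x
        = ENNReal.ofReal (Real.exp (-(l + a) * x) * W x / (s * x)) := by
    intro x hx
    have hx' : (0 : ℝ) < x := hx
    have hnn : 0 ≤ Real.exp (-a * x) * W x / (s * x) := by
      have := (hWpos x hx').le
      positivity
    simp only [Pi.mul_apply]
    rw [← ENNReal.ofReal_mul hnn]
    congr 1
    rw [show (-(l + a) * x) = (-l * x) + (-a * x) by ring, Real.exp_add]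
    ring
  rw [setLIntegral_congr_fun measurableSet_Ioi hpt2,
    hdens (l + a) (by linarith), ENNReal.toReal_ofReal]
  have hφnn : 0 ≤ φ (l + a) := by
    rw [hφ (l + a) (by linarith)]
    refine setIntegral_nonneg measurableSet_Ioi fun u hu => ?_
    exact (one_div_pos.mpr (hψpos u (by have : l + a < u := hu; linarith))).le
  exact div_nonneg hφnn hs.le
end

section
/- Let ψ be a critical branching mechanism (ψ'(0+) = 0) satisfying ∫^∞ 1/ψ < ∞, φ with inverse φ̂, and u_t(λ) = φ̂(t + φ(λ)). Then for every x > 0, s > 0 and λ > 0, lim_{t→∞} [e^{-x φ̂(t+φ(λ+φ̂(s)))} − e^{-xφ̂(t)}] / [e^{-xφ̂(t+s)} − e^{-xφ̂(t)}] = φ(λ + φ̂(s))/s. -/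
open MeasureTheory Set Filter

/- ### Elementary exponential inequalities -/

lemma aux_f_nonneg (u : ℝ) : 0 ≤ Real.exp (-u) - 1 + u := by
  have h1 := Real.add_one_le_exp (-u); linarith

lemma aux_f_le (u : ℝ) (hu : 0 ≤ u) : Real.exp (-u) - 1 + u ≤ min u (u^2) := by
  have h1 := Real.add_one_le_exp (-u)
  have h2 := Real.add_one_le_exp u
  have h3 : Real.exp (-u) * Real.exp u = 1 := by rw [← Real.exp_add]; simp
  have h4 := Real.exp_pos u
  have h5 := Real.exp_pos (-u)
  refine le_min (by nlinarith) (by nlinarith)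

lemma aux_mono (a b : ℝ) (ha : 0 ≤ a) (hab : a ≤ b) :
    Real.exp (-a) - 1 + a ≤ Real.exp (-b) - 1 + b := by
  have h1 : Real.exp (-a) ≤ 1 := by rw [Real.exp_le_one_iff]; linarith
  have h2 := Real.add_one_le_exp (a - b)
  have h3 : Real.exp (-b) = Real.exp (-a) * Real.exp (a - b) := by
    rw [← Real.exp_add]; ring_nf
  have h5 := Real.exp_pos (-a)
  nlinarith

lemma aux_diff (a b : ℝ) (hab : a ≤ b) :
    (Real.exp (-b) - 1 + b) - (Real.exp (-a) - 1 + a) ≤ (b - a) * (1 - Real.exp (-b)) := by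
  have h2 := Real.add_one_le_exp (b - a)
  have h3 : Real.exp (-a) = Real.exp (-b) * Real.exp (b - a) := by
    rw [← Real.exp_add]; ring_nf
  have h5 := Real.exp_pos (-b)
  nlinarith

lemma aux_one_sub_exp (u : ℝ) : 1 - Real.exp (-u) ≤ min 1 u := by
  have h1 := Real.add_one_le_exp (-u)
  have h5 := Real.exp_pos (-u)
  exact le_min (by linarith) (by linarith)

lemma aux_diff_min (m b r : ℝ) (hm : 0 ≤ m) (hmb : m ≤ b) (hr : 0 < r) :
    (Real.exp (-(b*r)) - 1 + b*r) - (Real.exp (-(m*r)) - 1 + m*r)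
      ≤ (b - m) * min r (b * r ^ 2) := by
  have h1 := aux_diff (m*r) (b*r) (by nlinarith)
  have h2 := aux_one_sub_exp (b*r)
  have h3 : 0 ≤ 1 - Real.exp (-(b*r)) := by
    have : Real.exp (-(b*r)) ≤ 1 := by rw [Real.exp_le_one_iff]; nlinarith
    linarith
  rcases le_total 1 (b*r) with h | h
  · have hmin : min r (b * r ^ 2) = r := min_eq_left (by nlinarith)
    rw [hmin]
    have h4 : 1 - Real.exp (-(b*r)) ≤ 1 := (h2.trans (min_le_left _ _))
    nlinarith [mul_nonneg (mul_nonneg (sub_nonneg.2 hmb) hr.le) (Real.exp_pos (-(b*r))).le]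
  · have hmin : min r (b * r ^ 2) = b * r ^ 2 := min_eq_right (by nlinarith)
    rw [hmin]
    have h4 : 1 - Real.exp (-(b*r)) ≤ b * r := (h2.trans (min_le_right _ _))
    nlinarith [mul_nonneg (mul_nonneg (sub_nonneg.2 hmb) hr.le) (sub_nonneg.2 h4)]

/-- Two-sided bound for differences of exponentials. -/
lemma aux_exp_diff (x p q : ℝ) (hx : 0 < x) (hpq : p ≤ q) :
    x * (q - p) * Real.exp (-x*q) ≤ Real.exp (-x*p) - Real.exp (-x*q) ∧
    Real.exp (-x*p) - Real.exp (-x*q) ≤ x * (q - p) * Real.exp (-x*p) := by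
  have h2 := Real.add_one_le_exp (x*(q-p))
  have h2' := Real.add_one_le_exp (-(x*(q-p)))
  have h3 : Real.exp (-x*p) = Real.exp (-x*q) * Real.exp (x*(q-p)) := by
    rw [← Real.exp_add]; ring_nf
  have h4 : Real.exp (-x*q) = Real.exp (-x*p) * Real.exp (-(x*(q-p))) := by
    rw [← Real.exp_add]; ring_nf
  have h5 := Real.exp_pos (-x*q)
  have h6 := Real.exp_pos (-x*p)
  constructor
  · nlinarith
  · nlinarith

/- ### Integrability lemmas -/

lemma aux_int_min (π : Measure ℝ)
    (hπ : Integrable (fun r => min r (r ^ 2)) (π.restrict (Set.Ioi 0)))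
    (l : ℝ) (hl : 0 ≤ l) :
    Integrable (fun r => min r (l * r ^ 2)) (π.restrict (Set.Ioi 0)) := by
  refine (hπ.const_mul (max 1 l)).mono ?_ ?_
  · exact (continuous_id.min (continuous_const.mul (continuous_pow 2))).aestronglyMeasurable
  · refine (ae_restrict_iff' measurableSet_Ioi).2 (Filter.Eventually.of_forall fun r hr => ?_)
    simp only [Real.norm_eq_abs]
    have hr0 : 0 < r := hr
    have h1 : 0 ≤ min r (l * r ^ 2) := le_min hr0.le (by positivity)
    have h2 : 0 ≤ min r (r ^ 2) := le_min hr0.le (by positivity)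
    rw [abs_of_nonneg h1, abs_of_nonneg (by positivity : (0:ℝ) ≤ max 1 l * min r (r ^ 2))]
    rcases le_total r 1 with h | h
    · have he : min r (r ^ 2) = r ^ 2 := min_eq_right (by nlinarith)
      rw [he]
      calc min r (l * r ^ 2) ≤ l * r ^ 2 := min_le_right _ _
        _ ≤ max 1 l * r ^ 2 := by nlinarith [le_max_right 1 l]
    · have he : min r (r ^ 2) = r := min_eq_left (by nlinarith)
      rw [he]
      calc min r (l * r ^ 2) ≤ r := min_le_left _ _
        _ ≤ max 1 l * r := by nlinarith [le_max_left 1 l]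

lemma aux_int_f (π : Measure ℝ)
    (hπ : Integrable (fun r => min r (r ^ 2)) (π.restrict (Set.Ioi 0)))
    (l : ℝ) (hl : 0 ≤ l) :
    Integrable (fun r => Real.exp (-l * r) - 1 + l * r) (π.restrict (Set.Ioi 0)) := by
  refine (hπ.const_mul (max l (l ^ 2))).mono ?_ ?_
  · exact (((Real.continuous_exp.comp (continuous_const.mul continuous_id)).sub
      continuous_const).add (continuous_const.mul continuous_id)).aestronglyMeasurable
  · refine (ae_restrict_iff' measurableSet_Ioi).2 (Filter.Eventually.of_forall fun r hr => ?_)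
    simp only [Real.norm_eq_abs]
    have hr0 : 0 < r := hr
    have h1 : 0 ≤ Real.exp (-(l * r)) - 1 + l * r := aux_f_nonneg _
    have h2 : Real.exp (-(l * r)) - 1 + l * r ≤ min (l*r) ((l*r)^2) :=
      aux_f_le _ (by positivity)
    have h3 : 0 ≤ min r (r ^ 2) := le_min hr0.le (by positivity)
    have hb : min (l*r) ((l*r)^2) ≤ max l (l ^ 2) * min r (r ^ 2) := by
      rcases le_total r 1 with h | h
      · have he : min r (r ^ 2) = r ^ 2 := min_eq_right (by nlinarith)
        rw [he]
        calc min (l*r) ((l*r)^2) ≤ (l*r) ^ 2 := min_le_right _ _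
          _ ≤ max l (l ^ 2) * r ^ 2 := by nlinarith [le_max_right l (l ^ 2)]
      · have he : min r (r ^ 2) = r := min_eq_left (by nlinarith)
        rw [he]
        calc min (l*r) ((l*r)^2) ≤ l*r := min_le_left _ _
          _ ≤ max l (l ^ 2) * r := by nlinarith [le_max_left l (l ^ 2)]
    rw [neg_mul]
    rw [abs_of_nonneg h1, abs_of_nonneg (by positivity : (0:ℝ) ≤ max l (l ^ 2) * min r (r ^ 2))]
    exact h2.trans hb

/- ### Properties of ψ from the Lévy–Khintchine formula -/

lemma psi_le {σ : ℝ} {π : Measure ℝ} {ψ : ℝ → ℝ} (hψ : LevyMechanism 0 σ π ψ)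
    {m b : ℝ} (hm : 0 ≤ m) (hmb : m ≤ b) : ψ m ≤ ψ b := by
  obtain ⟨hσ, hπ, hform⟩ := hψ
  rw [hform m, hform b]
  have hI : (∫ r in Set.Ioi 0, (Real.exp (-m * r) - 1 + m * r) ∂π)
      ≤ ∫ r in Set.Ioi 0, (Real.exp (-b * r) - 1 + b * r) ∂π := by
    refine setIntegral_mono_on (aux_int_f π hπ m hm) (aux_int_f π hπ b (hm.trans hmb))
      measurableSet_Ioi fun r hr => ?_
    have hr0 : 0 < r := hr
    have := aux_mono (m*r) (b*r) (by positivity) (by nlinarith)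
    rw [neg_mul, neg_mul]
    linarith
  nlinarith [mul_nonneg (sq_nonneg σ) (mul_nonneg (sub_nonneg.2 hmb) (by linarith : (0:ℝ) ≤ b + m))]

lemma psi_diff_le {σ : ℝ} {π : Measure ℝ} {ψ : ℝ → ℝ} (hψ : LevyMechanism 0 σ π ψ)
    {m b : ℝ} (hm : 0 ≤ m) (hmb : m ≤ b) :
    ψ b - ψ m ≤ (b - m) * (σ ^ 2 * b + ∫ r in Set.Ioi 0, min r (b * r ^ 2) ∂π) := by
  obtain ⟨hσ, hπ, hform⟩ := hψ
  have hb : 0 ≤ b := hm.trans hmb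
  rw [hform m, hform b]
  have hsub : (∫ r in Set.Ioi 0, (Real.exp (-b * r) - 1 + b * r) ∂π)
        - ∫ r in Set.Ioi 0, (Real.exp (-m * r) - 1 + m * r) ∂π
      = ∫ r in Set.Ioi 0,
          ((Real.exp (-b * r) - 1 + b * r) - (Real.exp (-m * r) - 1 + m * r)) ∂π :=
    (integral_sub (aux_int_f π hπ b hb) (aux_int_f π hπ m hm)).symm
  have hI : (∫ r in Set.Ioi 0,
        ((Real.exp (-b * r) - 1 + b * r) - (Real.exp (-m * r) - 1 + m * r)) ∂π)
      ≤ ∫ r in Set.Ioi 0, (b - m) * min r (b * r ^ 2) ∂π := by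
    refine setIntegral_mono_on
      ((aux_int_f π hπ b hb).sub (aux_int_f π hπ m hm))
      ((aux_int_min π hπ b hb).const_mul _) measurableSet_Ioi fun r hr => ?_
    have hr0 : 0 < r := hr
    have := aux_diff_min m b r hm hmb hr0
    rw [neg_mul, neg_mul]
    linarith
  rw [integral_const_mul] at hI
  nlinarith [mul_nonneg (sq_nonneg σ) (sq_nonneg (b - m))]

/- ### Properties of φ -/

section Phi
variable {ψ φ : ℝ → ℝ}
variable (hψpos : ∀ l > (0 : ℝ), 0 < ψ l)
variable (hψmono : ∀ m b : ℝ, 0 ≤ m → m ≤ b → ψ m ≤ ψ b)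
variable (hint : ∀ l > (0 : ℝ), IntegrableOn (fun v => 1 / ψ v) (Set.Ioi l))
variable (hφ : ∀ l > (0 : ℝ), φ l = ∫ v in Set.Ioi l, 1 / ψ v)

include hint hφ in
lemma phi_split {m b : ℝ} (hm : 0 < m) (hmb : m ≤ b) :
    φ m = (∫ v in Set.Ioc m b, 1 / ψ v) + φ b := by
  have hb : 0 < b := lt_of_lt_of_le hm hmb
  rw [hφ m hm, hφ b hb, ← Ioc_union_Ioi_eq_Ioi hmb]
  exact setIntegral_union (Ioc_disjoint_Ioi le_rfl) measurableSet_Ioi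
    ((hint m hm).mono_set Ioc_subset_Ioi_self)
    ((hint m hm).mono_set (Ioi_subset_Ioi hmb))

include hψpos hψmono hint in
lemma Ioc_le {m b : ℝ} (hm : 0 < m) (hmb : m ≤ b) :
    (∫ v in Set.Ioc m b, 1 / ψ v) ≤ (b - m) * (1 / ψ m) := by
  have h : (∫ v in Set.Ioc m b, 1 / ψ v) ≤ ∫ _ in Set.Ioc m b, 1 / ψ m := by
    refine setIntegral_mono_on ((hint m hm).mono_set Ioc_subset_Ioi_self)
      (integrableOn_const (μ := volume) (s := Set.Ioc m b) (by rw [Real.volume_Ioc]; exact ENNReal.ofReal_ne_top))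
      measurableSet_Ioc (fun v hv => ?_)
    exact one_div_le_one_div_of_le (hψpos m hm) (hψmono m v hm.le hv.1.le)
  rwa [setIntegral_const, Real.volume_real_Ioc, max_eq_left (by linarith), smul_eq_mul] at h

include hψpos hψmono hint in
lemma Ioc_ge {m b : ℝ} (hm : 0 < m) (hmb : m ≤ b) :
    (b - m) * (1 / ψ b) ≤ ∫ v in Set.Ioc m b, 1 / ψ v := by
  have hb : 0 < b := lt_of_lt_of_le hm hmb
  have h : (∫ _ in Set.Ioc m b, 1 / ψ b) ≤ ∫ v in Set.Ioc m b, 1 / ψ v := by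
    refine setIntegral_mono_on
      (integrableOn_const (μ := volume) (s := Set.Ioc m b) (by rw [Real.volume_Ioc]; exact ENNReal.ofReal_ne_top))
      ((hint m hm).mono_set Ioc_subset_Ioi_self)
      measurableSet_Ioc (fun v hv => ?_)
    exact one_div_le_one_div_of_le (hψpos v (hm.trans hv.1)) (hψmono v b (hm.trans hv.1).le hv.2)
  rwa [setIntegral_const, Real.volume_real_Ioc, max_eq_left (by linarith), smul_eq_mul] at h

include hψpos hφ in
lemma phi_nonneg {v : ℝ} (hv : 0 < v) : 0 ≤ φ v := by
  rw [hφ v hv]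
  exact setIntegral_nonneg measurableSet_Ioi fun x hx =>
    (one_div_pos.2 (hψpos x (hv.trans hx))).le

include hψpos hψmono hint hφ in
lemma phi_pos {v : ℝ} (hv : 0 < v) : 0 < φ v := by
  have hsplit := phi_split hint hφ hv (by linarith : v ≤ v + 1)
  have hge := Ioc_ge hψpos hψmono hint hv (by linarith : v ≤ v + 1)
  have h1 : 0 < ψ (v + 1) := hψpos _ (by linarith)
  have h2 : (0:ℝ) < (v + 1 - v) * (1 / ψ (v + 1)) := by
    rw [show v + 1 - v = (1:ℝ) by ring]
    positivity
  have h3 := phi_nonneg hψpos hφ (show (0:ℝ) < v + 1 by linarith)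
  linarith

include hψpos hψmono hint hφ in
lemma phi_anti_s13 {m b : ℝ} (hm : 0 < m) (hmb : m ≤ b) : φ b ≤ φ m := by
  have hsplit := phi_split hint hφ hm hmb
  have hge := Ioc_ge hψpos hψmono hint hm hmb
  have h1 : 0 < ψ b := hψpos _ (hm.trans_le hmb)
  have h2 : (0:ℝ) ≤ (b - m) * (1 / ψ b) := mul_nonneg (by linarith) (one_div_pos.2 h1).le
  linarith
end Phi

/- ### The dominated convergence step -/

lemma gtend' (π : Measure ℝ)
    (hπ : Integrable (fun r => min r (r ^ 2)) (π.restrict (Set.Ioi 0))) :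
    Tendsto (fun lam => ∫ r in Set.Ioi 0, min r (lam * r ^ 2) ∂π)
      (nhdsWithin 0 (Set.Ioi 0)) (nhds 0) := by
  have h0 : Set.Ioc (0:ℝ) 1 ∈ nhdsWithin (0:ℝ) (Set.Ioi 0) := Ioc_mem_nhdsGT (by
    norm_num)
  have h := tendsto_integral_filter_of_dominated_convergence
    (μ := π.restrict (Set.Ioi 0)) (F := fun lam (r : ℝ) => min r (lam * r ^ 2))
    (f := fun _ => (0:ℝ)) (bound := fun r => min r (r ^ 2))
    (l := nhdsWithin 0 (Set.Ioi 0))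
    (Filter.Eventually.of_forall fun lam =>
      (continuous_id.min (continuous_const.mul (continuous_pow 2))).aestronglyMeasurable)
    (by
      filter_upwards [h0] with lam hlam
      refine (ae_restrict_iff' measurableSet_Ioi).2 (Filter.Eventually.of_forall fun r hr => ?_)
      have hr0 : 0 < r := hr
      have h1 : 0 ≤ min r (lam * r ^ 2) := le_min hr0.le (by nlinarith [hlam.1])
      rw [Real.norm_eq_abs, abs_of_nonneg h1]
      exact min_le_min le_rfl (by nlinarith [hlam.2]))
    hπ
    (by
      refine (ae_restrict_iff' measurableSet_Ioi).2 (Filter.Eventually.of_forall fun r hr => ?_)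
      have hr0 : 0 < r := hr
      have : Tendsto (fun lam : ℝ => min r (lam * r ^ 2)) (nhds 0) (nhds (min r (0 * r ^ 2))) :=
        Continuous.tendsto (continuous_const.min ((continuous_id.mul continuous_const))) 0
      rw [zero_mul, min_eq_right hr0.le] at this
      exact this.mono_left nhdsWithin_le_nhds)
  simpa using h

lemma gtend (σ : ℝ) (π : Measure ℝ)
    (hπ : Integrable (fun r => min r (r ^ 2)) (π.restrict (Set.Ioi 0))) :
    Tendsto (fun lam => σ ^ 2 * lam + ∫ r in Set.Ioi 0, min r (lam * r ^ 2) ∂π)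
      (nhdsWithin 0 (Set.Ioi 0)) (nhds 0) := by
  have h1 : Tendsto (fun lam : ℝ => σ ^ 2 * lam) (nhdsWithin 0 (Set.Ioi 0)) (nhds 0) := by
    have : Tendsto (fun lam : ℝ => σ ^ 2 * lam) (nhds 0) (nhds (σ ^ 2 * 0)) :=
      Continuous.tendsto (continuous_const.mul continuous_id) 0
    rw [mul_zero] at this
    exact this.mono_left nhdsWithin_le_nhds
  simpa using h1.add (gtend' π hπ)

/-- Critical case: the conditional Laplace functional of `Z_t` given
`t ≤ ζ < t+s` converges to `φ(λ + φ̂(s))/s` as `t → ∞`. -/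
theorem stmt13 (σ : ℝ) (π : Measure ℝ) (ψ φ φhat : ℝ → ℝ)
    (hψ : LevyMechanism 0 σ π ψ)
    (hψpos : ∀ l > (0 : ℝ), 0 < ψ l)
    (hint : ∀ l > (0 : ℝ), IntegrableOn (fun v => 1 / ψ v) (Set.Ioi l))
    (hφ : ∀ l > (0 : ℝ), φ l = ∫ v in Set.Ioi l, 1 / ψ v)
    (hφhat : ∀ t > (0 : ℝ), 0 < φhat t ∧ φ (φhat t) = t) :
    ∀ x > (0 : ℝ), ∀ s > (0 : ℝ), ∀ l > (0 : ℝ),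
      Tendsto (fun t =>
          (Real.exp (-x * φhat (t + φ (l + φhat s))) - Real.exp (-x * φhat t)) /
            (Real.exp (-x * φhat (t + s)) - Real.exp (-x * φhat t)))
        atTop (nhds (φ (l + φhat s) / s)) := by
  intro x hx s hs l hl
  have hπ := hψ.2.1
  have hψmono : ∀ m b : ℝ, 0 ≤ m → m ≤ b → ψ m ≤ ψ b := fun m b h1 h2 => psi_le hψ h1 h2
  have hhpos : ∀ t > (0:ℝ), 0 < φhat t := fun t ht => (hφhat t ht).1
  have hheq : ∀ t > (0:ℝ), φ (φhat t) = t := fun t ht => (hφhat t ht).2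
  set a := φ (l + φhat s) with ha
  have hla : 0 < l + φhat s := by have := hhpos s hs; linarith
  have ha0 : 0 < a := phi_pos hψpos hψmono hint hφ hla
  have hhlt : ∀ t > (0:ℝ), ∀ u > (0:ℝ), φhat (t + u) < φhat t := by
    intro t ht u hu
    by_contra hcon
    push_neg at hcon
    have h2 : φ (φhat (t+u)) ≤ φ (φhat t) :=
      phi_anti_s13 hψpos hψmono hint hφ (hhpos t ht) hcon
    rw [hheq t ht, hheq (t+u) (by linarith)] at h2
    linarith
  have hh0 : Tendsto φhat atTop (nhds 0) := by
    refine tendsto_order.2 ⟨fun b hb => ?_, fun b hb => ?_⟩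
    · filter_upwards [eventually_gt_atTop 0] with t ht
      exact hb.trans (hhpos t ht)
    · filter_upwards [eventually_gt_atTop (max (φ b) 0)] with t ht
      have ht0 : 0 < t := (le_max_right _ _).trans_lt ht
      by_contra hcon
      push_neg at hcon
      have h2 : φ (φhat t) ≤ φ b := phi_anti_s13 hψpos hψmono hint hφ hb hcon
      rw [hheq t ht0] at h2
      have := (le_max_left (φ b) 0).trans_lt ht
      linarith
  have hh0' : Tendsto φhat atTop (nhdsWithin 0 (Set.Ioi 0)) :=
    tendsto_nhdsWithin_iff.2 ⟨hh0, by
      filter_upwards [eventually_gt_atTop 0] with t ht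
      exact hhpos t ht⟩
  set g : ℝ → ℝ := fun lam => σ ^ 2 * lam + ∫ r in Set.Ioi 0, min r (lam * r ^ 2) ∂π with hg
  have hgt : Tendsto (fun t => g (φhat t)) atTop (nhds 0) := (gtend σ π hπ).comp hh0'
  have hgnn : ∀ lam > (0:ℝ), 0 ≤ g lam := by
    intro lam hlam
    have h2 : 0 ≤ ∫ r in Set.Ioi 0, min r (lam * r ^ 2) ∂π :=
      setIntegral_nonneg measurableSet_Ioi fun r hr => le_min (le_of_lt hr) (by positivity)
    have h3 : 0 ≤ σ ^ 2 * lam := by positivity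
    simp only [hg]
    linarith
  have hkey : ∀ u > (0:ℝ), ∀ t > (0:ℝ),
      u * ψ (φhat (t+u)) ≤ φhat t - φhat (t+u) ∧
      φhat t - φhat (t+u) ≤ u * ψ (φhat t) := by
    intro u hu t ht
    have htu : 0 < t + u := by linarith
    have hm : 0 < φhat (t+u) := hhpos _ htu
    have hlt : φhat (t+u) < φhat t := hhlt t ht u hu
    have hsplit := phi_split hint hφ hm hlt.le
    rw [hheq (t+u) htu, hheq t ht] at hsplit
    have hIoc : (∫ v in Set.Ioc (φhat (t+u)) (φhat t), 1 / ψ v) = u := by linarith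
    have hle := Ioc_le hψpos hψmono hint hm hlt.le
    have hge := Ioc_ge hψpos hψmono hint hm hlt.le
    rw [hIoc] at hle hge
    have hpm := hψpos _ hm
    have hpb := hψpos _ (hhpos t ht)
    constructor
    · have h5 := mul_le_mul_of_nonneg_right hle hpm.le
      rw [mul_assoc, one_div, inv_mul_cancel₀ (ne_of_gt hpm), mul_one] at h5
      linarith
    · have h5 := mul_le_mul_of_nonneg_right hge hpb.le
      rw [mul_assoc, one_div, inv_mul_cancel₀ (ne_of_gt hpb), mul_one] at h5
      linarith
  have hpsir : ∀ u > (0:ℝ),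
      Tendsto (fun t => ψ (φhat (t+u)) / ψ (φhat t)) atTop (nhds 1) := by
    intro u hu
    have hlow : Tendsto (fun t => 1 - u * g (φhat t)) atTop (nhds 1) := by
      have h1 := hgt.const_mul u
      rw [mul_zero] at h1
      have h2 := (tendsto_const_nhds (x := (1:ℝ)) (f := atTop)).sub h1
      rwa [sub_zero] at h2
    refine tendsto_of_tendsto_of_tendsto_of_le_of_le' hlow tendsto_const_nhds ?_ ?_
    · filter_upwards [eventually_gt_atTop 0] with t ht
      have htu : 0 < t + u := by linarith
      have hb := hhpos t ht
      have hm := hhpos _ htu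
      have hpb := hψpos _ hb
      have hkk := hkey u hu t ht
      have hd := psi_diff_le hψ hm.le (hhlt t ht u hu).le
      have hgb : σ ^ 2 * φhat t + (∫ r in Set.Ioi 0, min r (φhat t * r ^ 2) ∂π)
          = g (φhat t) := rfl
      rw [hgb] at hd
      have h3 : (φhat t - φhat (t+u)) * g (φhat t) ≤ (u * ψ (φhat t)) * g (φhat t) :=
        mul_le_mul_of_nonneg_right hkk.2 (hgnn _ hb)
      rw [le_div_iff₀ hpb]
      nlinarith
    · filter_upwards [eventually_gt_atTop 0] with t ht
      have htu : 0 < t + u := by linarith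
      have hpb := hψpos _ (hhpos t ht)
      rw [div_le_one hpb]
      exact hψmono _ _ (hhpos _ htu).le (hhlt t ht u hu).le
  have hQ : Tendsto (fun t => (φhat t - φhat (t+a)) / (φhat t - φhat (t+s)))
      atTop (nhds (a / s)) := by
    have hlow : Tendsto (fun t => (a / s) * (ψ (φhat (t+a)) / ψ (φhat t)))
        atTop (nhds (a/s)) := by
      have h1 := (hpsir a ha0).const_mul (a/s)
      rwa [mul_one] at h1
    have hupp : Tendsto (fun t => (a / s) * (ψ (φhat (t+s)) / ψ (φhat t))⁻¹)
        atTop (nhds (a/s)) := by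
      have h1 := ((hpsir s hs).inv₀ one_ne_zero).const_mul (a/s)
      rwa [inv_one, mul_one] at h1
    refine tendsto_of_tendsto_of_tendsto_of_le_of_le' hlow hupp ?_ ?_
    · filter_upwards [eventually_gt_atTop 0] with t ht
      obtain ⟨hA1, hA2⟩ := hkey a ha0 t ht
      obtain ⟨hS1, hS2⟩ := hkey s hs t ht
      have hpb := hψpos _ (hhpos t ht)
      have hpma := hψpos _ (hhpos (t+a) (by linarith))
      have hpms := hψpos _ (hhpos (t+s) (by linarith))
      have hDs : 0 < φhat t - φhat (t+s) := by nlinarith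
      have h1 : (a * ψ (φhat (t+a))) / (s * ψ (φhat t))
          ≤ (φhat t - φhat (t+a)) / (φhat t - φhat (t+s)) :=
        div_le_div₀ (by nlinarith) hA1 hDs hS2
      calc (a / s) * (ψ (φhat (t+a)) / ψ (φhat t))
          = (a * ψ (φhat (t+a))) / (s * ψ (φhat t)) := by
            rw [div_mul_div_comm]
        _ ≤ _ := h1
    · filter_upwards [eventually_gt_atTop 0] with t ht
      obtain ⟨hA1, hA2⟩ := hkey a ha0 t ht
      obtain ⟨hS1, hS2⟩ := hkey s hs t ht
      have hpb := hψpos _ (hhpos t ht)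
      have hpma := hψpos _ (hhpos (t+a) (by linarith))
      have hpms := hψpos _ (hhpos (t+s) (by linarith))
      have h1 : (φhat t - φhat (t+a)) / (φhat t - φhat (t+s))
          ≤ (a * ψ (φhat t)) / (s * ψ (φhat (t+s))) :=
        div_le_div₀ (by nlinarith) hA2 (by nlinarith) hS1
      calc (φhat t - φhat (t+a)) / (φhat t - φhat (t+s))
          ≤ (a * ψ (φhat t)) / (s * ψ (φhat (t+s))) := h1
        _ = (a / s) * (ψ (φhat t) / ψ (φhat (t+s))) := by
            rw [div_mul_div_comm]
        _ = (a / s) * (ψ (φhat (t+s)) / ψ (φhat t))⁻¹ := by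
            rw [inv_div]
  have hexp : ∀ h : ℝ → ℝ, Tendsto h atTop (nhds 0) →
      Tendsto (fun t => Real.exp (-x * h t)) atTop (nhds 1) := by
    intro h hh
    have h1 : Tendsto (fun t => -x * h t) atTop (nhds 0) := by
      have h2 := hh.const_mul (-x)
      rwa [mul_zero] at h2
    have h3 := (Real.continuous_exp.tendsto 0).comp h1
    rwa [Real.exp_zero] at h3
  have hh0a : Tendsto (fun t => φhat (t + a)) atTop (nhds 0) :=
    hh0.comp (tendsto_atTop_add_const_right atTop a tendsto_id)
  have hh0s : Tendsto (fun t => φhat (t + s)) atTop (nhds 0) :=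
    hh0.comp (tendsto_atTop_add_const_right atTop s tendsto_id)
  have hE : Tendsto (fun t => Real.exp (-x * φhat t)) atTop (nhds 1) := hexp _ hh0
  have hEa : Tendsto (fun t => Real.exp (-x * φhat (t + a))) atTop (nhds 1) := hexp _ hh0a
  have hEs : Tendsto (fun t => Real.exp (-x * φhat (t + s))) atTop (nhds 1) := hexp _ hh0s
  have hL : Tendsto (fun t => ((φhat t - φhat (t+a)) / (φhat t - φhat (t+s)))
        * (Real.exp (-x * φhat t) / Real.exp (-x * φhat (t+s))))
      atTop (nhds (a/s)) := by
    simpa using hQ.mul (hE.div hEs one_ne_zero)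
  have hU : Tendsto (fun t => ((φhat t - φhat (t+a)) / (φhat t - φhat (t+s)))
        * (Real.exp (-x * φhat (t+a)) / Real.exp (-x * φhat t)))
      atTop (nhds (a/s)) := by
    simpa using hQ.mul (hEa.div hE one_ne_zero)
  refine tendsto_of_tendsto_of_tendsto_of_le_of_le' hL hU ?_ ?_
  · filter_upwards [eventually_gt_atTop 0] with t ht
    have hba : φhat (t+a) < φhat t := hhlt t ht a ha0
    have hdc : φhat (t+s) < φhat t := hhlt t ht s hs
    have hd0 : 0 < φhat (t+s) := hhpos _ (by linarith)
    obtain ⟨hN1, hN2⟩ := aux_exp_diff x (φhat (t+a)) (φhat t) hx hba.le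
    obtain ⟨hD1, hD2⟩ := aux_exp_diff x (φhat (t+s)) (φhat t) hx hdc.le
    have hDenpos : 0 < Real.exp (-x * φhat (t+s)) - Real.exp (-x * φhat t) := by
      have h1 : -x * φhat t < -x * φhat (t+s) := by nlinarith
      have h2 := Real.exp_lt_exp.2 h1
      linarith
    have hstep : (x * (φhat t - φhat (t+a)) * Real.exp (-x * φhat t))
          / (x * (φhat t - φhat (t+s)) * Real.exp (-x * φhat (t+s)))
        ≤ (Real.exp (-x * φhat (t+a)) - Real.exp (-x * φhat t))
          / (Real.exp (-x * φhat (t+s)) - Real.exp (-x * φhat t)) :=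
      div_le_div₀ ((mul_nonneg (mul_nonneg hx.le
          (by linarith : (0:ℝ) ≤ φhat t - φhat (t+a))) (Real.exp_pos _).le).trans hN1)
        hN1 hDenpos hD2
    have heq : (x * (φhat t - φhat (t+a)) * Real.exp (-x * φhat t))
          / (x * (φhat t - φhat (t+s)) * Real.exp (-x * φhat (t+s)))
        = ((φhat t - φhat (t+a)) / (φhat t - φhat (t+s)))
          * (Real.exp (-x * φhat t) / Real.exp (-x * φhat (t+s))) := by
      rw [div_mul_div_comm]
      rw [show x * (φhat t - φhat (t+a)) * Real.exp (-x * φhat t)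
          = x * ((φhat t - φhat (t+a)) * Real.exp (-x * φhat t)) by ring,
        show x * (φhat t - φhat (t+s)) * Real.exp (-x * φhat (t+s))
          = x * ((φhat t - φhat (t+s)) * Real.exp (-x * φhat (t+s))) by ring,
        mul_div_mul_left _ _ (ne_of_gt hx)]
    rw [heq] at hstep
    exact hstep
  · filter_upwards [eventually_gt_atTop 0] with t ht
    have hba : φhat (t+a) < φhat t := hhlt t ht a ha0
    have hdc : φhat (t+s) < φhat t := hhlt t ht s hs
    have hb0 : 0 < φhat (t+a) := hhpos _ (by linarith)
    obtain ⟨hN1, hN2⟩ := aux_exp_diff x (φhat (t+a)) (φhat t) hx hba.le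
    obtain ⟨hD1, hD2⟩ := aux_exp_diff x (φhat (t+s)) (φhat t) hx hdc.le
    have hstep : (Real.exp (-x * φhat (t+a)) - Real.exp (-x * φhat t))
          / (Real.exp (-x * φhat (t+s)) - Real.exp (-x * φhat t))
        ≤ (x * (φhat t - φhat (t+a)) * Real.exp (-x * φhat (t+a)))
          / (x * (φhat t - φhat (t+s)) * Real.exp (-x * φhat t)) :=
      div_le_div₀ (mul_nonneg (mul_nonneg hx.le
          (by linarith : (0:ℝ) ≤ φhat t - φhat (t+a))) (Real.exp_pos _).le) hN2
        (mul_pos (mul_pos hx (by linarith : (0:ℝ) < φhat t - φhat (t+s))) (Real.exp_pos _)) hD1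
    have heq : (x * (φhat t - φhat (t+a)) * Real.exp (-x * φhat (t+a)))
          / (x * (φhat t - φhat (t+s)) * Real.exp (-x * φhat t))
        = ((φhat t - φhat (t+a)) / (φhat t - φhat (t+s)))
          * (Real.exp (-x * φhat (t+a)) / Real.exp (-x * φhat t)) := by
      rw [div_mul_div_comm]
      rw [show x * (φhat t - φhat (t+a)) * Real.exp (-x * φhat (t+a))
          = x * ((φhat t - φhat (t+a)) * Real.exp (-x * φhat (t+a))) by ring,
        show x * (φhat t - φhat (t+s)) * Real.exp (-x * φhat t)
          = x * ((φhat t - φhat (t+s)) * Real.exp (-x * φhat t)) by ring,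
        mul_div_mul_left _ _ (ne_of_gt hx)]
    rw [heq] at hstep
    exact hstep
end
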